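/- For every integer n ≥ 2, the structure of the algebra C₁ lies in the closure of the union over all α ∈ ℂ of the GL(V)-orbits of the structures of C₂(α); that is, the family {C₂(α)}_{α ∈ ℂ} degenerates to C₁. -/

import Mathlib

open Function Submodule

/-! Common framework: `V = ℂ^{n+1}`, `n`-ary multiplications as functions
`(Fin n → V) → V`, the action of `GL(V)` on them, orbits, and the
(n+1)-dimensional n-ary Filippov algebras of Kaygorodov–Volkov, each described
as an alternating `n`-linear map by its values on the increasing tuples of
distinct standard basis vectors (0-indexed: `bt n j` is the tuple omitting `e j`). -/

/-- The underlying space `V = ℂ^{n+1}`. -/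
abbrev nV (n : ℕ) : Type := Fin (n + 1) → ℂ

/-- The `j`-th standard basis vector of `V` (0-indexed). -/
def sb (n : ℕ) (j : Fin (n + 1)) : nV n := Pi.single j 1

/-- The increasing `n`-tuple of standard basis vectors omitting `e j`. -/
def bt (n : ℕ) (j : Fin (n + 1)) : Fin n → nV n := fun k => sb n (j.succAbove k)

/-- The action of `GL(V)` (invertible linear maps) on `n`-ary multiplications:
`(g • μ)(x₁, …, xₙ) = g (μ (g⁻¹ x₁, …, g⁻¹ xₙ))`. -/
noncomputable def glAct (n : ℕ) (g : nV n ≃ₗ[ℂ] nV n) (μ : (Fin n → nV n) → nV n) :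
    (Fin n → nV n) → nV n :=
  fun x => g (μ fun i => g.symm (x i))

/-- The `GL(V)`-orbit of an `n`-ary multiplication. -/
def glOrbit (n : ℕ) (μ : (Fin n → nV n) → nV n) : Set ((Fin n → nV n) → nV n) :=
  {ν | ∃ g : nV n ≃ₗ[ℂ] nV n, ν = glAct n g μ}

/-- The algebra `B`: `[e₂, …, e_{n+1}] = e₁` (0-indexed: the tuple omitting `e 0`
maps to `e 0`), all other increasing basis products zero. -/
def IsB (n : ℕ) (μ : AlternatingMap ℂ (nV n) (nV n) (Fin n)) : Prop :=
  μ (bt n 0) = sb n 0 ∧ ∀ j : Fin (n + 1), j ≠ 0 → μ (bt n j) = 0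

/-- The algebra `C₁`: `[e₂, …, e_{n+1}] = e₁`, `[e₁, e₃, …, e_{n+1}] = e₂`. -/
def IsC1 (n : ℕ) (μ : AlternatingMap ℂ (nV n) (nV n) (Fin n)) : Prop :=
  μ (bt n 0) = sb n 0 ∧ μ (bt n 1) = sb n 1 ∧
    ∀ j : Fin (n + 1), j ≠ 0 → j ≠ 1 → μ (bt n j) = 0

/-- The algebra `C₂(α)`: `[e₂, …, e_{n+1}] = α e₁ + e₂`, `[e₁, e₃, …, e_{n+1}] = e₂`. -/
def IsC2 (n : ℕ) (α : ℂ) (μ : AlternatingMap ℂ (nV n) (nV n) (Fin n)) : Prop :=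
  μ (bt n 0) = α • sb n 0 + sb n 1 ∧ μ (bt n 1) = sb n 1 ∧
    ∀ j : Fin (n + 1), j ≠ 0 → j ≠ 1 → μ (bt n j) = 0

/-- The algebra `C₃`: `[e₁, e₃, …, e_{n+1}] = e₁`, `[e₂, e₃, …, e_{n+1}] = e₂`. -/
def IsC3 (n : ℕ) (μ : AlternatingMap ℂ (nV n) (nV n) (Fin n)) : Prop :=
  μ (bt n 1) = sb n 0 ∧ μ (bt n 0) = sb n 1 ∧
    ∀ j : Fin (n + 1), j ≠ 0 → j ≠ 1 → μ (bt n j) = 0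

/-- The algebra `D_r`: `[e₁, …, e_{i-1}, e_{i+1}, …, e_{n+1}] = e_i` for `1 ≤ i ≤ r`
(0-indexed: the tuple omitting `e j` maps to `e j` for `j < r` and to `0` otherwise). -/
def IsD (n r : ℕ) (μ : AlternatingMap ℂ (nV n) (nV n) (Fin n)) : Prop :=
  ∀ j : Fin (n + 1), ((j : ℕ) < r → μ (bt n j) = sb n j) ∧ (r ≤ (j : ℕ) → μ (bt n j) = 0)


theorem exists_succAbove_of_injective {n : ℕ} {v : Fin n → Fin (n+1)}
    (hv : Function.Injective v) :
    ∃ (j : Fin (n+1)) (σ : Equiv.Perm (Fin n)), v ∘ σ = Fin.succAbove j := by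
  classical
  obtain ⟨σ, hσ⟩ : ∃ σ : Equiv.Perm (Fin n), Monotone (v ∘ σ) :=
    ⟨Tuple.sort v, Tuple.monotone_sort v⟩
  have hsm : StrictMono (v ∘ σ) := hσ.strictMono_of_injective (hv.comp σ.injective)
  have hns : ¬ Function.Surjective v := by
    intro hs
    have := Fintype.card_le_of_surjective v hs
    simp at this
  obtain ⟨j, hj⟩ := not_forall.mp hns
  have hj' : j ∉ Set.range v := by simpa using hj
  have hrange : Set.range (v ∘ σ) = Set.range (Fin.succAbove j) := by
    rw [Set.range_comp, σ.surjective.range_eq, Set.image_univ, Fin.range_succAbove]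
    apply Set.eq_of_subset_of_card_le
    · intro x hx hx'
      simp at hx'
      subst hx'
      exact hj' hx
    · rw [Set.card_range_of_injective hv]
      have h3 : Fintype.card ({j}ᶜ : Set (Fin (n+1))) = n := by
        rw [Fintype.card_compl_set]; simp
      rw [h3]; simp
  refine ⟨j, σ, ?_⟩
  have wf : WellFoundedLT (Fin n) := inferInstance
  exact (StrictMono.range_inj (β := Fin n) hsm (Fin.strictMono_succAbove j)).mp hrange

/-- Two alternating maps agreeing on the increasing basis tuples are equal. -/
theorem alt_ext {n : ℕ} {f g : AlternatingMap ℂ (nV n) (nV n) (Fin n)}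
    (h : ∀ j, f (bt n j) = g (bt n j)) : f = g := by
  classical
  apply Module.Basis.ext_alternating (Pi.basisFun ℂ (Fin (n+1)))
  intro v hv
  obtain ⟨j, σ, hσ⟩ := exists_succAbove_of_injective hv
  have key : (fun i => (Pi.basisFun ℂ (Fin (n+1))) (v i)) ∘ σ = bt n j := by
    funext i
    have := congrFun hσ i
    simp only [Function.comp] at this ⊢
    rw [this]
    simp [bt, sb, Pi.basisFun_apply]
  have hf := f.map_perm (fun i => (Pi.basisFun ℂ (Fin (n+1))) (v i)) σ
  have hg := g.map_perm (fun i => (Pi.basisFun ℂ (Fin (n+1))) (v i)) σ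
  rw [key] at hf hg
  have : (Equiv.Perm.sign σ) • f (fun i => (Pi.basisFun ℂ (Fin (n+1))) (v i))
      = (Equiv.Perm.sign σ) • g (fun i => (Pi.basisFun ℂ (Fin (n+1))) (v i)) := by
    rw [← hf, ← hg, h j]
  exact smul_left_cancel _ this

/-- Diagonal entries `t, 1, t⁻¹, 1, …, 1`. -/
noncomputable def dd (n : ℕ) (t : ℂ) : Fin (n+1) → ℂ :=
  fun i => if i = 0 then t else if (i : ℕ) = 2 then t⁻¹ else 1

theorem dd_ne_zero {n : ℕ} {t : ℂ} (ht : t ≠ 0) (i : Fin (n+1)) : dd n t i ≠ 0 := by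
  unfold dd
  split
  · exact ht
  · split
    · exact inv_ne_zero ht
    · exact one_ne_zero

theorem dd_prod {n : ℕ} (hn : 2 ≤ n) {t : ℂ} (ht : t ≠ 0) :
    ∏ i, dd n t i = 1 := by
  classical
  set j2 : Fin (n+1) := ⟨2, by omega⟩ with hj2def
  have h0 : (0 : Fin (n+1)) ∈ (Finset.univ : Finset (Fin (n+1))) := Finset.mem_univ _
  have hj2 : j2 ∈ Finset.univ.erase (0 : Fin (n+1)) := by
    rw [Finset.mem_erase]
    refine ⟨?_, Finset.mem_univ _⟩
    intro hc
    have : (j2 : ℕ) = 0 := by rw [hc]; rfl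
    simp [hj2def] at this
  rw [← Finset.mul_prod_erase _ _ h0, ← Finset.mul_prod_erase _ _ hj2]
  have hrest : ∀ i ∈ (Finset.univ.erase (0 : Fin (n+1))).erase j2, dd n t i = 1 := by
    intro i hi
    rw [Finset.mem_erase, Finset.mem_erase] at hi
    have h1 : i ≠ 0 := hi.2.1
    have h2 : (i : ℕ) ≠ 2 := by
      intro hc
      exact hi.1 (Fin.ext hc)
    simp [dd, h1, h2]
  rw [Finset.prod_eq_one hrest]
  have hd0 : dd n t 0 = t := by simp [dd]
  have hdj2 : dd n t j2 = t⁻¹ := by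
    have : j2 ≠ 0 := by
      intro hc
      have : (j2 : ℕ) = 0 := by rw [hc]; rfl
      simp [hj2def] at this
    simp [dd, this, hj2def]
  rw [hd0, hdj2, mul_one, mul_inv_cancel₀ ht]

/-- The diagonal linear automorphism with entries `dd`. -/
noncomputable def dg (n : ℕ) {t : ℂ} (ht : t ≠ 0) : nV n ≃ₗ[ℂ] nV n :=
  LinearEquiv.piCongrRight fun i => LinearEquiv.smulOfNeZero ℂ ℂ _ (dd_ne_zero ht i)

theorem dg_apply {n : ℕ} {t : ℂ} (ht : t ≠ 0) (x : nV n) (i : Fin (n+1)) :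
    dg n ht x i = dd n t i * x i := rfl

theorem dg_sb {n : ℕ} {t : ℂ} (ht : t ≠ 0) (i : Fin (n+1)) :
    dg n ht (sb n i) = dd n t i • sb n i := by
  funext l
  rw [dg_apply]
  simp [sb, Pi.single_apply]
  by_cases h : l = i <;> simp [h]

theorem dg_symm_sb {n : ℕ} {t : ℂ} (ht : t ≠ 0) (i : Fin (n+1)) :
    (dg n ht).symm (sb n i) = (dd n t i)⁻¹ • sb n i := by
  rw [LinearEquiv.symm_apply_eq, map_smul, dg_sb ht, smul_smul,
    inv_mul_cancel₀ (dd_ne_zero ht i), one_smul]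

/-- The key computation: the conjugated alternating map on basis tuples. -/
theorem conj_bt {n : ℕ} (hn : 2 ≤ n) {t : ℂ} (ht : t ≠ 0)
    (μ0 : AlternatingMap ℂ (nV n) (nV n) (Fin n)) (j : Fin (n+1)) :
    ((dg n ht).toLinearMap.compAlternatingMap
        (μ0.compLinearMap (dg n ht).symm.toLinearMap)) (bt n j)
      = dd n t j • (dg n ht) (μ0 (bt n j)) := by
  rw [LinearMap.compAlternatingMap_apply, AlternatingMap.compLinearMap_apply]
  have harg : ∀ i, (dg n ht).symm.toLinearMap (bt n j i)
      = (dd n t (j.succAbove i))⁻¹ • bt n j i := by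
    intro i
    simp [bt, dg_symm_sb ht]
  simp only [harg]
  have := μ0.toMultilinearMap.map_smul_univ
    (fun k => (dd n t (j.succAbove k))⁻¹) (bt n j)
  rw [show (μ0 fun k => (dd n t (j.succAbove k))⁻¹ • bt n j k)
      = (∏ k, (dd n t (j.succAbove k))⁻¹) • μ0 (bt n j) from this]
  have hprod : (∏ k, (dd n t (j.succAbove k))⁻¹) = dd n t j := by
    rw [Finset.prod_inv_distrib]
    have h1 : dd n t j * ∏ k, dd n t (j.succAbove k) = 1 := by
      rw [← Fin.prod_univ_succAbove (dd n t) j]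
      exact dd_prod hn ht
    have h2 : ∏ k, dd n t (j.succAbove k) = (dd n t j)⁻¹ :=
      eq_inv_of_mul_eq_one_right h1
    rw [h2, inv_inv]
  rw [map_smul, hprod]
  rfl

/-- For every integer `n ≥ 2`, the structure of `C₁` lies in the closure of
the union over all `α ∈ ℂ` of the `GL(V)`-orbits of the structures `C₂(α)`. -/
theorem C2_family_degenerates_to_C1 (n : ℕ) (hn : 2 ≤ n)
    (μ : ℂ → AlternatingMap ℂ (nV n) (nV n) (Fin n)) (hμ : ∀ α : ℂ, IsC2 n α (μ α))
    (ν : AlternatingMap ℂ (nV n) (nV n) (Fin n)) (hν : IsC1 n ν) :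
    ⇑ν ∈ closure (⋃ α : ℂ, glOrbit n ⇑(μ α)) := by
  classical
  -- notation for the conjugated map
  set A : ∀ t : ℂ, t ≠ 0 → AlternatingMap ℂ (nV n) (nV n) (Fin n) :=
    fun t ht => (dg n ht).toLinearMap.compAlternatingMap
      ((μ ((t^2)⁻¹)).compLinearMap (dg n ht).symm.toLinearMap) with hA
  have hval1 : ((1 : Fin (n+1)) : ℕ) = 1 := by
    rw [Fin.val_one']
    exact Nat.mod_eq_of_lt (by omega)
  have hd1 : ∀ t : ℂ, dd n t 1 = 1 := by
    intro t
    have h10 : (1 : Fin (n+1)) ≠ 0 := by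
      apply Fin.ne_of_val_ne
      rw [hval1, Fin.val_zero]
      omega
    have hm : 1 % (n+1) = 1 := Nat.mod_eq_of_lt (by omega)
    simp [dd, h10, Fin.val_one', hm]
  have hd0 : ∀ t : ℂ, dd n t 0 = t := by intro t; simp [dd]
  -- values of A on the basis tuples
  have hA0 : ∀ (t : ℂ) (ht : t ≠ 0), A t ht (bt n 0) = sb n 0 + t • sb n 1 := by
    intro t ht
    rw [hA]
    rw [conj_bt hn ht, (hμ ((t^2)⁻¹)).1, map_add, map_smul, dg_sb ht, dg_sb ht,
      hd0, hd1, one_smul, smul_add]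
    congr 1
    rw [smul_smul, smul_smul]
    rw [show t * (t ^ 2)⁻¹ * t = 1 by
      rw [pow_two]
      field_simp]
    rw [one_smul]
  have hA1 : ∀ (t : ℂ) (ht : t ≠ 0), A t ht (bt n 1) = sb n 1 := by
    intro t ht
    rw [hA]
    rw [conj_bt hn ht, (hμ ((t^2)⁻¹)).2.1, dg_sb ht, hd1, one_smul, one_smul]
  have hAj : ∀ (t : ℂ) (ht : t ≠ 0) (j : Fin (n+1)), j ≠ 0 → j ≠ 1 →
      A t ht (bt n j) = 0 := by
    intro t ht j hj0 hj1
    rw [hA]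
    rw [conj_bt hn ht, (hμ ((t^2)⁻¹)).2.2 j hj0 hj1, map_zero, smul_zero]
  -- the perturbation η
  set η : AlternatingMap ℂ (nV n) (nV n) (Fin n) := A 1 one_ne_zero - ν with hη
  have hdecomp : ∀ (t : ℂ) (ht : t ≠ 0), A t ht = ν + t • η := by
    intro t ht
    apply alt_ext
    intro j
    by_cases hj0 : j = 0
    · subst hj0
      rw [hA0 t ht]
      simp only [AlternatingMap.add_apply, AlternatingMap.smul_apply, hη,
        AlternatingMap.sub_apply]
      rw [hA0 1 one_ne_zero, hν.1, one_smul, add_sub_cancel_left]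
    · by_cases hj1 : j = 1
      · subst hj1
        rw [hA1 t ht]
        simp only [AlternatingMap.add_apply, AlternatingMap.smul_apply, hη,
          AlternatingMap.sub_apply]
        rw [hA1 1 one_ne_zero, hν.2.1]
        simp
      · rw [hAj t ht j hj0 hj1]
        simp only [AlternatingMap.add_apply, AlternatingMap.smul_apply, hη,
          AlternatingMap.sub_apply]
        rw [hAj 1 one_ne_zero j hj0 hj1, hν.2.2 j hj0 hj1]
        simp
  -- membership of the curve in the union of orbits
  have hmem : ∀ (t : ℂ), t ≠ 0 →
      ⇑(ν + t • η) ∈ ⋃ α : ℂ, glOrbit n ⇑(μ α) := by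
    intro t ht
    apply Set.mem_iUnion.mpr
    refine ⟨(t^2)⁻¹, (dg n ht), ?_⟩
    rw [← hdecomp t ht]
    funext x
    rw [hA]
    simp [glAct, AlternatingMap.compLinearMap_apply, Function.comp]
  -- convergence as t → 0
  have htend : Filter.Tendsto (fun t : ℂ => ⇑(ν + t • η))
      (nhdsWithin 0 {(0:ℂ)}ᶜ) (nhds ⇑ν) := by
    apply Filter.Tendsto.mono_left _ nhdsWithin_le_nhds
    rw [tendsto_pi_nhds]
    intro x
    have hcoe : ∀ t : ℂ, (ν + t • η) x = ν x + t • η x := by intro t; simp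
    simp only [hcoe]
    have : Filter.Tendsto (fun t : ℂ => ν x + t • η x) (nhds 0)
        (nhds (ν x + (0:ℂ) • η x)) :=
      tendsto_const_nhds.add ((continuous_id.smul continuous_const).tendsto 0)
    simpa using this
  exact mem_closure_of_tendsto htend
    (eventually_mem_nhdsWithin.mono fun t ht => hmem t ht)
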